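/- Let n ∈ ℕ, let Φ be an n × n real orthogonal matrix, and let d_{0,ℓ}, d_{1,ℓ} > 0 (ℓ = 1,…,n). Set C_i := Φ · diag(d_{i,1}, …, d_{i,n}) · Φᵀ. Then 1 − (det C₀ · det C₁)^{1/4} / det((C₀ + C₁)/2)^{1/2} ≤ (1/4) · Σ_{ℓ=1}^n ( √(d_{0,ℓ}/d_{1,ℓ}) + √(d_{1,ℓ}/d_{0,ℓ}) − 2 ). -/

import Mathlib

open Matrix

lemma sLemma10 (s : ℝ) (hs : 2 ≤ s) : 1 - Real.sqrt (2 / s) ≤ (s - 2) / 4 := by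
  rcases le_or_gt s 6 with h | h
  · have hnn : (0:ℝ) ≤ (6 - s) / 4 := by linarith
    have hsq : ((6 - s) / 4) ^ 2 ≤ 2 / s := by
      rw [div_pow, div_le_div_iff₀ (by norm_num) (by linarith : (0:ℝ) < s)]
      nlinarith [mul_nonneg (sq_nonneg (s - 2)) (by linarith : (0:ℝ) ≤ 8 - s)]
    have := (Real.le_sqrt hnn (by positivity)).mpr hsq
    linarith
  · have := Real.sqrt_nonneg (2 / s)
    linarith

lemma termLemma10 (a b : ℝ) (ha : 0 < a) (hb : 0 < b) :
    0 ≤ (a * b) ^ ((1:ℝ)/4) / ((a + b) / 2) ^ ((1:ℝ)/2) ∧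
    (a * b) ^ ((1:ℝ)/4) / ((a + b) / 2) ^ ((1:ℝ)/2) ≤ 1 ∧
    1 - (a * b) ^ ((1:ℝ)/4) / ((a + b) / 2) ^ ((1:ℝ)/2)
      ≤ 1/4 * (Real.sqrt (a / b) + Real.sqrt (b / a) - 2) := by
  have hx : 0 < Real.sqrt a := Real.sqrt_pos.mpr ha
  have hy : 0 < Real.sqrt b := Real.sqrt_pos.mpr hb
  set x := Real.sqrt a with hxdef
  set y := Real.sqrt b with hydef
  have hxa : x ^ 2 = a := Real.sq_sqrt ha.le
  have hyb : y ^ 2 = b := Real.sq_sqrt hb.le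
  have hab : Real.sqrt (a * b) = x * y := Real.sqrt_mul ha.le b
  have h14 : (a * b) ^ ((1:ℝ)/4) = Real.sqrt (Real.sqrt (a * b)) := by
    rw [show (1:ℝ)/4 = (1/2) * (1/2) by norm_num, Real.rpow_mul (by positivity),
      ← Real.sqrt_eq_rpow, ← Real.sqrt_eq_rpow]
  have h12 : ((a + b) / 2) ^ ((1:ℝ)/2) = Real.sqrt ((a + b) / 2) :=
    (Real.sqrt_eq_rpow _).symm
  have hr : (a * b) ^ ((1:ℝ)/4) / ((a + b) / 2) ^ ((1:ℝ)/2)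
      = Real.sqrt (Real.sqrt (a * b) / ((a + b) / 2)) := by
    rw [h14, h12, Real.sqrt_div (Real.sqrt_nonneg _)]
  set s := (x ^ 2 + y ^ 2) / (x * y) with hsdef
  have hs2 : 2 ≤ s := by
    rw [hsdef, le_div_iff₀ (by positivity)]
    nlinarith [sq_nonneg (x - y)]
  have harg : Real.sqrt (a * b) / ((a + b) / 2) = 2 / s := by
    rw [hab, hsdef, ← hxa, ← hyb]
    field_simp
  have hquot : Real.sqrt (a / b) + Real.sqrt (b / a) = s := by
    rw [Real.sqrt_div ha.le, Real.sqrt_div hb.le, ← hxdef, ← hydef, hsdef]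
    field_simp
  rw [hr, harg]
  refine ⟨Real.sqrt_nonneg _, ?_, ?_⟩
  · refine Real.sqrt_le_one.mpr ?_
    rw [div_le_one (by linarith)]
    linarith
  · have := sLemma10 s hs2
    rw [hquot]
    linarith

lemma prodLemma10 {ι : Type*} (s : Finset ι) (r : ι → ℝ)
    (h0 : ∀ i ∈ s, 0 ≤ r i) (h1 : ∀ i ∈ s, r i ≤ 1) :
    1 - ∏ i ∈ s, r i ≤ ∑ i ∈ s, (1 - r i) := by
  induction s using Finset.cons_induction with
  | empty => simp
  | cons a t ha ih =>
    rw [Finset.prod_cons, Finset.sum_cons]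
    have hP0 : 0 ≤ ∏ i ∈ t, r i :=
      Finset.prod_nonneg fun i hi => h0 i (Finset.mem_cons_of_mem hi)
    have hP1 : (∏ i ∈ t, r i) ≤ 1 :=
      Finset.prod_le_one (fun i hi => h0 i (Finset.mem_cons_of_mem hi))
        (fun i hi => h1 i (Finset.mem_cons_of_mem hi))
    have hih := ih (fun i hi => h0 i (Finset.mem_cons_of_mem hi))
      (fun i hi => h1 i (Finset.mem_cons_of_mem hi))
    have hra0 := h0 a (Finset.mem_cons_self a t)
    have hra1 := h1 a (Finset.mem_cons_self a t)
    nlinarith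

/-- Hellinger bound from the proof of Lemma A.1: for simultaneously diagonalizable
positive covariances `C_i = Φ diag(d_i) Φᵀ` (orthogonal `Φ`),
`1 − (det C₀ det C₁)^{1/4} / det((C₀+C₁)/2)^{1/2}
  ≤ (1/4) Σ_ℓ (√(d₀ℓ/d₁ℓ) + √(d₁ℓ/d₀ℓ) − 2)`. -/
theorem stmt_10 (n : ℕ) (Φ : Matrix (Fin n) (Fin n) ℝ) (hΦ : Φᵀ * Φ = 1)
    (d0 d1 : Fin n → ℝ) (h0 : ∀ ℓ, 0 < d0 ℓ) (h1 : ∀ ℓ, 0 < d1 ℓ) :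
    1 - ((Φ * Matrix.diagonal d0 * Φᵀ).det * (Φ * Matrix.diagonal d1 * Φᵀ).det)
          ^ ((1 : ℝ) / 4)
        / (((1 / 2 : ℝ) • (Φ * Matrix.diagonal d0 * Φᵀ + Φ * Matrix.diagonal d1 * Φᵀ)).det)
          ^ ((1 : ℝ) / 2)
      ≤ (1 / 4) * ∑ ℓ : Fin n,
          (Real.sqrt (d0 ℓ / d1 ℓ) + Real.sqrt (d1 ℓ / d0 ℓ) - 2) := by
  have hdet2 : Φ.det * Φ.det = 1 := by
    have h := congrArg Matrix.det hΦ
    rwa [Matrix.det_mul, Matrix.det_transpose, Matrix.det_one] at h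
  have key : ∀ e : Fin n → ℝ, (Φ * Matrix.diagonal e * Φᵀ).det = ∏ ℓ, e ℓ := by
    intro e
    rw [Matrix.det_mul, Matrix.det_mul, Matrix.det_transpose, Matrix.det_diagonal]
    linear_combination (∏ ℓ, e ℓ) * hdet2
  have hden : (((1 / 2 : ℝ) • (Φ * Matrix.diagonal d0 * Φᵀ + Φ * Matrix.diagonal d1 * Φᵀ))).det
      = ∏ ℓ, ((d0 ℓ + d1 ℓ) / 2) := by
    have hadd : Φ * Matrix.diagonal d0 * Φᵀ + Φ * Matrix.diagonal d1 * Φᵀ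
        = Φ * Matrix.diagonal (fun ℓ => d0 ℓ + d1 ℓ) * Φᵀ := by
      rw [← Matrix.add_mul, ← Matrix.mul_add, Matrix.diagonal_add]
    rw [hadd, Matrix.det_smul, key, Finset.prod_div_distrib, Finset.prod_const,
      Finset.card_univ, Fintype.card_fin]
    rw [one_div, div_eq_mul_inv, inv_pow]
    exact mul_comm _ _
  rw [key d0, key d1, hden, ← Finset.prod_mul_distrib,
    ← Real.finset_prod_rpow Finset.univ (fun ℓ => d0 ℓ * d1 ℓ)
      (fun i _ => (mul_pos (h0 i) (h1 i)).le) ((1:ℝ)/4),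
    ← Real.finset_prod_rpow Finset.univ (fun ℓ => (d0 ℓ + d1 ℓ) / 2)
      (fun i _ => by linarith [h0 i, h1 i]) ((1:ℝ)/2),
    ← Finset.prod_div_distrib]
  have hterm := fun ℓ : Fin n => termLemma10 (d0 ℓ) (d1 ℓ) (h0 ℓ) (h1 ℓ)
  calc 1 - ∏ ℓ, (d0 ℓ * d1 ℓ) ^ ((1:ℝ)/4) / ((d0 ℓ + d1 ℓ) / 2) ^ ((1:ℝ)/2)
      ≤ ∑ ℓ, (1 - (d0 ℓ * d1 ℓ) ^ ((1:ℝ)/4) / ((d0 ℓ + d1 ℓ) / 2) ^ ((1:ℝ)/2)) :=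
        prodLemma10 _ _ (fun i _ => (hterm i).1) (fun i _ => (hterm i).2.1)
    _ ≤ ∑ ℓ, 1/4 * (Real.sqrt (d0 ℓ / d1 ℓ) + Real.sqrt (d1 ℓ / d0 ℓ) - 2) :=
        Finset.sum_le_sum fun i _ => (hterm i).2.2
    _ = (1 / 4) * ∑ ℓ, (Real.sqrt (d0 ℓ / d1 ℓ) + Real.sqrt (d1 ℓ / d0 ℓ) - 2) := by
        rw [Finset.mul_sum]
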